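/- Let G be a finite graph, s: V → [0,∞) a vertex weight function, d_s the shortest-path pseudometric induced by edge weights w({u,v}) = (s(u)+s(v))/2, and f: V → ℝ a non-constant function that is 1-Lipschitz with respect to d_s. Then the vertex sparsity of G is at most (Σ_{v∈V} s(v)) / (Σ_{{u,v}∈binom(V,2)} |f(u)-f(v)|). -/

import Mathlib

open Finset MeasureTheory

variable {V : Type*} [Fintype V] [DecidableEq V]

/-- The weight of a walk under the edge weights `w({a,b}) = (s(a)+s(b))/2` derived from a
vertex weight function `s`. -/
noncomputable def walkWeight (G : SimpleGraph V) (s : V → ℝ) {u v : V}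
    (p : G.Walk u v) : ℝ :=
  (p.edges.map (Sym2.lift ⟨fun a b => (s a + s b) / 2, fun a b => by ring⟩)).sum

/-- The shortest-path pseudometric induced by the vertex weights `s`. -/
noncomputable def spDist (G : SimpleGraph V) (s : V → ℝ) (u v : V) : ℝ :=
  sInf {r : ℝ | ∃ p : G.Walk u v, r = walkWeight G s p}

/-- `(A,B,S)` is a vertex cut of `G`. -/
def IsVertexCut7 (G : SimpleGraph V) (A B S : Finset V) : Prop :=
  A.Nonempty ∧ B.Nonempty ∧ Disjoint A B ∧ Disjoint A S ∧ Disjoint B S ∧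
    A ∪ B ∪ S = Finset.univ ∧ ∀ a ∈ A, ∀ b ∈ B, ¬ G.Adj a b

section aux
set_option linter.unusedSectionVars false

lemma walkWeight_nonneg {G : SimpleGraph V} {s : V → ℝ} (hs : ∀ v, 0 ≤ s v) {u v : V}
    (p : G.Walk u v) : 0 ≤ walkWeight G s p := by
  induction p with
  | nil => simp [walkWeight]
  | @cons a b c h p ih =>
    simp only [walkWeight, SimpleGraph.Walk.edges_cons, List.map_cons, List.sum_cons,
      Sym2.lift_mk] at ih ⊢
    have h1 := hs a; have h2 := hs b
    linarith

lemma spDist_le_adj {G : SimpleGraph V} {s : V → ℝ} (hs : ∀ v, 0 ≤ s v) {a b : V}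
    (hab : G.Adj a b) : spDist G s a b ≤ (s a + s b) / 2 := by
  have h : walkWeight G s (SimpleGraph.Walk.cons hab SimpleGraph.Walk.nil) = (s a + s b)/2 := by
    simp [walkWeight]
  rw [spDist, ← h]
  refine csInf_le ⟨0, fun r hr => ?_⟩ ⟨_, rfl⟩
  obtain ⟨p, rfl⟩ := hr
  exact walkWeight_nonneg hs p

lemma walkWeight_zero {G : SimpleGraph V} {s : V → ℝ} (hz : ∀ v, s v = 0) {u v : V}
    (p : G.Walk u v) : walkWeight G s p = 0 := by
  induction p with
  | nil => simp [walkWeight]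
  | @cons a b c h p ih =>
    simp only [walkWeight, SimpleGraph.Walk.edges_cons, List.map_cons, List.sum_cons,
      Sym2.lift_mk] at ih ⊢
    rw [hz a, hz b, ih]; ring

lemma sum_s_pos {G : SimpleGraph V} {s : V → ℝ} (hs : ∀ v, 0 ≤ s v) {f : V → ℝ}
    (hnonconst : ∃ u v, f u ≠ f v)
    (hLip : ∀ u v, |f u - f v| ≤ spDist G s u v) : 0 < ∑ v, s v := by
  rcases hnonconst with ⟨u, v, huv⟩
  rcases (Finset.sum_nonneg fun i _ => hs i).lt_or_eq with h | h
  · exact h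
  exfalso
  have hz : ∀ w, s w = 0 := fun w =>
    (Finset.sum_eq_zero_iff_of_nonneg (fun i _ => hs i)).1 h.symm w (mem_univ w)
  have hle : spDist G s u v ≤ 0 := by
    by_cases hw : Nonempty (G.Walk u v)
    · refine csInf_le ⟨0, fun r hr => ?_⟩ ⟨hw.some, (walkWeight_zero hz hw.some).symm⟩
      obtain ⟨p, rfl⟩ := hr
      rw [walkWeight_zero hz p]
    · have : {r : ℝ | ∃ p : G.Walk u v, r = walkWeight G s p} = ∅ := by
        rw [Set.eq_empty_iff_forall_notMem]
        rintro r ⟨p, -⟩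
        exact hw ⟨p⟩
      rw [spDist, this, Real.sInf_empty]
  exact huv (sub_eq_zero.1 (abs_nonpos_iff.1 ((hLip u v).trans hle)))

end aux

/-- Feige–Hajiaghayi–Lee: if `s : V → [0,∞)` is a vertex weight function, `d_s` the induced
shortest-path pseudometric, and `f : V → ℝ` a non-constant `1`-Lipschitz function w.r.t.
`d_s`, then the vertex sparsity of `G` is at most
`(∑_v s(v)) / (∑_{{u,v}} |f(u)-f(v)|)`. -/
theorem stmt_7 (G : SimpleGraph V) (s : V → ℝ) (hs : ∀ v, 0 ≤ s v)
    (f : V → ℝ) (hnonconst : ∃ u v, f u ≠ f v)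
    (hLip : ∀ u v, |f u - f v| ≤ spDist G s u v) :
    sInf {r : ℝ | ∃ A B S : Finset V, IsVertexCut7 G A B S ∧
        r = (S.card : ℝ) / (((A ∪ S).card : ℝ) * ((B ∪ S).card : ℝ))}
      ≤ (∑ v, s v) / ((∑ u, ∑ v, |f u - f v|) / 2) := by
  classical
  obtain ⟨u₀, v₀, hne0⟩ := hnonconst
  have hVne : u₀ ≠ v₀ := fun h => hne0 (by rw [h])
  set setS : Set ℝ := {r : ℝ | ∃ A B S : Finset V, IsVertexCut7 G A B S ∧
      r = (S.card : ℝ) / (((A ∪ S).card : ℝ) * ((B ∪ S).card : ℝ))} with hsetS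
  have hbdd : BddBelow setS := by
    refine ⟨0, fun r hr => ?_⟩
    obtain ⟨A, B, S, -, rfl⟩ := hr
    positivity
  set n : ℕ := Fintype.card V with hn
  have hn2 : 2 ≤ n := Fintype.one_lt_card_iff_nontrivial.2 ⟨⟨u₀, v₀, hVne⟩⟩
  have hnpos : (0:ℝ) < n := by exact_mod_cast Nat.lt_of_lt_of_le Nat.zero_lt_two hn2
  set D : ℝ := (∑ u, ∑ v, |f u - f v|) / 2 with hD
  have hDpos : 0 < D := by
    have h1 : 0 < ∑ v, |f u₀ - f v| :=
      Finset.sum_pos' (fun i _ => abs_nonneg _)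
        ⟨v₀, mem_univ v₀, abs_pos.2 (sub_ne_zero.2 hne0)⟩
    have h2 : 0 < ∑ u, ∑ v, |f u - f v| :=
      Finset.sum_pos' (fun i _ => Finset.sum_nonneg fun j _ => abs_nonneg _)
        ⟨u₀, mem_univ u₀, h1⟩
    rw [hD]; linarith
  have hspos : 0 < ∑ v, s v := sum_s_pos hs ⟨u₀, v₀, hne0⟩ hLip
  set c : ℝ := (∑ v, s v) / D with hc
  have hcpos : 0 < c := div_pos hspos hDpos
  have hcD : c * D = ∑ v, s v := div_mul_cancel₀ _ hDpos.ne'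
  show sInf setS ≤ c
  rcases le_or_gt (1 / (n:ℝ)) c with hcn | hcn
  · -- easy case: any cut has sparsity ≤ 1/n ≤ c
    rcases setS.eq_empty_or_nonempty with hemp | ⟨r, hr⟩
    · rw [hemp, Real.sInf_empty]; exact hcpos.le
    · refine (csInf_le hbdd hr).trans (le_trans ?_ hcn)
      obtain ⟨A, B, S, hcut, rfl⟩ := hr
      obtain ⟨hA, hB, hAB, hAS, hBS, huniv, -⟩ := hcut
      have h1 : ((A ∪ B) ∪ S).card = (A ∪ B).card + S.card :=
        Finset.card_union_of_disjoint (Finset.disjoint_union_left.2 ⟨hAS, hBS⟩)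
      have h2 : (A ∪ B).card = A.card + B.card := Finset.card_union_of_disjoint hAB
      rw [huniv, Finset.card_univ, h2] at h1
      have hsum : (A.card:ℝ) + B.card + S.card = n := by
        rw [hn]; exact_mod_cast h1.symm
      have hAuS : ((A ∪ S).card : ℝ) = (A.card:ℝ) + S.card := by
        rw [Finset.card_union_of_disjoint hAS]; push_cast; ring
      have hBuS : ((B ∪ S).card : ℝ) = (B.card:ℝ) + S.card := by
        rw [Finset.card_union_of_disjoint hBS]; push_cast; ring
      have hα : (1:ℝ) ≤ A.card := by exact_mod_cast Finset.card_pos.2 hA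
      have hβ : (1:ℝ) ≤ B.card := by exact_mod_cast Finset.card_pos.2 hB
      have hk : (0:ℝ) ≤ S.card := Nat.cast_nonneg _
      have hαβ : (1:ℝ) ≤ (A.card:ℝ) * B.card := by nlinarith
      have hkn : (S.card:ℝ) * n = (S.card:ℝ) * ((A.card:ℝ) + B.card + S.card) := by
        rw [hsum]
      rw [hAuS, hBuS, div_le_div_iff₀ (by nlinarith) hnpos]
      nlinarith
  · -- hard case: c < 1/n
    by_contra hcon
    push_neg at hcon
    set lo : V → ℝ := fun v => f v - s v / 2 with hlo
    set hi : V → ℝ := fun v => f v + s v / 2 with hhi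
    have hlohi : ∀ v, lo v ≤ hi v := fun v => by
      have := hs v; simp only [hlo, hhi]; linarith
    obtain ⟨v₁, -, hv₁⟩ := Finset.exists_min_image univ hi ⟨u₀, mem_univ u₀⟩
    obtain ⟨v₂, -, hv₂⟩ := Finset.exists_max_image univ lo ⟨u₀, mem_univ u₀⟩
    set J : Set ℝ := Set.Ioc (hi v₁) (lo v₂) with hJ
    set Sfun : ℝ → ℝ := fun t => ∑ v, if lo v < t ∧ t ≤ hi v then 1 else 0 with hSfun
    set ABfun : ℝ → ℝ := fun t => ∑ u, ∑ v, if lo u < t ∧ t ≤ hi v then 1 else 0 with hABfun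
    have hind : ∀ a b : ℝ, (fun t => if a < t ∧ t ≤ b then (1:ℝ) else 0)
        = (Set.Ioc a b).indicator (fun _ => (1:ℝ)) := by
      intro a b; funext t; simp [Set.indicator_apply, Set.mem_Ioc]
    have hint : ∀ a b : ℝ, Integrable (fun t => if a < t ∧ t ≤ b then (1:ℝ) else 0) := by
      intro a b; rw [hind]
      exact (integrable_indicator_iff measurableSet_Ioc).2
        ((integrableOn_const_iff).2 (Or.inr (by rw [Real.volume_Ioc]; exact ENNReal.ofReal_lt_top)))
    have hintval : ∀ a b : ℝ, (∫ t, if a < t ∧ t ≤ b then (1:ℝ) else 0) = max (b - a) 0 := by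
      intro a b; rw [hind, integral_indicator_const (1:ℝ) measurableSet_Ioc]
      simp [Real.volume_Ioc, ENNReal.toReal_ofReal']
    have hintS : Integrable Sfun := integrable_finset_sum _ fun v _ => hint _ _
    have hintAB : Integrable ABfun :=
      integrable_finset_sum _ fun u _ => integrable_finset_sum _ fun v _ => hint _ _
    have hIS : ∫ t, Sfun t = ∑ v, s v := by
      rw [hSfun, integral_finset_sum _ fun v _ => hint _ _]
      refine Finset.sum_congr rfl fun v _ => ?_
      rw [hintval]
      have hv : hi v - lo v = s v := by simp only [hlo, hhi]; ring
      rw [hv, max_eq_left (hs v)]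
    have hIAB : D + (∑ v, s v) ≤ ∫ t, ABfun t := by
      have h1 : ∫ t, ABfun t = ∑ u, ∑ v, max (hi v - lo u) 0 := by
        rw [hABfun,
          integral_finset_sum _ fun u _ => integrable_finset_sum _ fun v _ => hint _ _]
        refine Finset.sum_congr rfl fun u _ => ?_
        rw [integral_finset_sum _ fun v _ => hint _ _]
        exact Finset.sum_congr rfl fun v _ => hintval _ _
      have key : ∀ u v : V, |f u - f v| + (s u + s v) / 2
          ≤ max (hi v - lo u) 0 + max (hi u - lo v) 0 := by
        intro u v
        have h1 := le_max_left (hi v - lo u) 0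
        have h2 := le_max_right (hi v - lo u) 0
        have h3 := le_max_left (hi u - lo v) 0
        have h4 := le_max_right (hi u - lo v) 0
        simp only [hlo, hhi] at h1 h3
        rcases abs_cases (f u - f v) with ⟨he, -⟩ | ⟨he, -⟩ <;> rw [he] <;> linarith
      have h2 : 2 * (∑ u, ∑ v, max (hi v - lo u) 0)
          = ∑ u, ∑ v, (max (hi v - lo u) 0 + max (hi u - lo v) 0) := by
        simp only [Finset.sum_add_distrib, two_mul]
        congr 1
        rw [Finset.sum_comm]
      have e1 : ∑ u, ∑ v : V, ((s u + s v)/2) = n * ∑ v, s v := by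
        have einner : ∀ u, ∑ v : V, ((s u + s v)/2) = ((n:ℝ) * s u + ∑ v, s v)/2 := by
          intro u
          rw [← Finset.sum_div]
          congr 1
          rw [Finset.sum_add_distrib, Finset.sum_const, Finset.card_univ, nsmul_eq_mul, hn]
        rw [Finset.sum_congr rfl fun u _ => einner u, ← Finset.sum_div,
          Finset.sum_add_distrib, Finset.sum_const, Finset.card_univ, nsmul_eq_mul,
          ← Finset.mul_sum, hn]
        ring
      have h3 : ∑ u, ∑ v : V, (|f u - f v| + (s u + s v)/2) = 2 * D + n * (∑ v, s v) := by
        simp only [Finset.sum_add_distrib]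
        rw [e1, hD]
        ring
      have h4 : 2 * D + n * (∑ v, s v) ≤ 2 * (∑ u, ∑ v, max (hi v - lo u) 0) := by
        rw [h2, ← h3]
        exact Finset.sum_le_sum fun u _ => Finset.sum_le_sum fun v _ => key u v
      have hge : (2:ℝ) ≤ n := by exact_mod_cast hn2
      rw [h1]
      nlinarith [hspos]
    have hptT : ∀ t ∉ J, ABfun t = n * Sfun t := by
      intro t ht
      rw [hJ, Set.mem_Ioc, not_and_or, not_lt, not_le] at ht
      rcases ht with h | h
      · have hall : ∀ v, t ≤ hi v := fun v => h.trans (hv₁ v (mem_univ v))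
        calc ABfun t = ∑ u, ∑ v : V, if lo u < t then (1:ℝ) else 0 := by
              rw [hABfun]
              exact Finset.sum_congr rfl fun u _ => Finset.sum_congr rfl fun v _ => by
                simp [hall v]
          _ = ∑ u : V, (n : ℝ) * (if lo u < t then (1:ℝ) else 0) := by
              refine Finset.sum_congr rfl fun u _ => ?_
              rw [Finset.sum_const, Finset.card_univ, nsmul_eq_mul, hn]
          _ = (n:ℝ) * Sfun t := by
              rw [← Finset.mul_sum, hSfun]
              congr 1
              exact Finset.sum_congr rfl fun v _ => by simp [hall v]
      · have hall : ∀ v, lo v < t := fun v => lt_of_le_of_lt (hv₂ v (mem_univ v)) h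
        calc ABfun t = ∑ u : V, ∑ v : V, if t ≤ hi v then (1:ℝ) else 0 := by
              rw [hABfun]
              exact Finset.sum_congr rfl fun u _ => Finset.sum_congr rfl fun v _ => by
                simp [hall u]
          _ = (n:ℝ) * ∑ v : V, (if t ≤ hi v then (1:ℝ) else 0) := by
              rw [Finset.sum_const, Finset.card_univ, nsmul_eq_mul, hn]
          _ = (n:ℝ) * Sfun t := by
              rw [hSfun]
              congr 1
              exact Finset.sum_congr rfl fun v _ => by simp [hall v]
    have hJm : MeasurableSet J := measurableSet_Ioc
    have hTint : ∫ t in Jᶜ, ABfun t = (n:ℝ) * ∫ t in Jᶜ, Sfun t := by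
      rw [← integral_const_mul]
      exact setIntegral_congr_fun hJm.compl fun t ht => hptT t ht
    have hptJ : ∀ t ∈ J, c * ABfun t ≤ Sfun t := by
      intro t ht
      obtain ⟨ht1, ht2⟩ := ht
      set A : Finset V := univ.filter (fun v => hi v < t) with hAdef
      set B : Finset V := univ.filter (fun v => t ≤ lo v) with hBdef
      set S' : Finset V := univ.filter (fun v => lo v < t ∧ t ≤ hi v) with hS'def
      have hcut : IsVertexCut7 G A B S' := by
        refine ⟨⟨v₁, ?_⟩, ⟨v₂, ?_⟩, ?_, ?_, ?_, ?_, ?_⟩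
        · simp only [hAdef, Finset.mem_filter, mem_univ, true_and]; exact ht1
        · simp only [hBdef, Finset.mem_filter, mem_univ, true_and]; exact ht2
        · rw [Finset.disjoint_left]
          intro a ha hb
          simp only [hAdef, Finset.mem_filter, mem_univ, true_and] at ha
          simp only [hBdef, Finset.mem_filter, mem_univ, true_and] at hb
          have := hlohi a; linarith
        · rw [Finset.disjoint_left]
          intro a ha hb
          simp only [hAdef, Finset.mem_filter, mem_univ, true_and] at ha
          simp only [hS'def, Finset.mem_filter, mem_univ, true_and] at hb
          linarith [hb.2]
        · rw [Finset.disjoint_left]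
          intro a ha hb
          simp only [hBdef, Finset.mem_filter, mem_univ, true_and] at ha
          simp only [hS'def, Finset.mem_filter, mem_univ, true_and] at hb
          linarith [hb.1]
        · ext v
          simp only [hAdef, hBdef, hS'def, Finset.mem_union, Finset.mem_filter, mem_univ,
            true_and, iff_true]
          rcases lt_or_ge (hi v) t with h1 | h1
          · exact Or.inl (Or.inl h1)
          rcases le_or_gt t (lo v) with h2 | h2
          · exact Or.inl (Or.inr h2)
          · exact Or.inr ⟨h2, h1⟩
        · intro a ha b hb hadj
          simp only [hAdef, Finset.mem_filter, mem_univ, true_and] at ha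
          simp only [hBdef, Finset.mem_filter, mem_univ, true_and] at hb
          have h1 := (hLip a b).trans (spDist_le_adj hs hadj)
          have h3 : f b - f a ≤ |f a - f b| := by
            rw [abs_sub_comm]; exact le_abs_self _
          simp only [hlo, hhi] at ha hb
          linarith
      have hAS : A ∪ S' = univ.filter (fun v => lo v < t) := by
        ext v
        simp only [hAdef, hS'def, Finset.mem_union, Finset.mem_filter, mem_univ, true_and]
        constructor
        · rintro (h | h)
          · exact lt_of_le_of_lt (hlohi v) h
          · exact h.1
        · intro h
          rcases lt_or_ge (hi v) t with h2 | h2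
          · exact Or.inl h2
          · exact Or.inr ⟨h, h2⟩
      have hBS : B ∪ S' = univ.filter (fun v => t ≤ hi v) := by
        ext v
        simp only [hBdef, hS'def, Finset.mem_union, Finset.mem_filter, mem_univ, true_and]
        constructor
        · rintro (h | h)
          · exact h.trans (hlohi v)
          · exact h.2
        · intro h
          rcases le_or_gt t (lo v) with h2 | h2
          · exact Or.inl h2
          · exact Or.inr ⟨h2, h⟩
      have hSval : Sfun t = (S'.card : ℝ) := by
        rw [hSfun, hS'def]
        exact Finset.sum_boole _ _
      have hABval : ABfun t = ((A ∪ S').card : ℝ) * ((B ∪ S').card : ℝ) := by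
        have e : ABfun t = (∑ u : V, if lo u < t then (1:ℝ) else 0)
            * (∑ v : V, if t ≤ hi v then (1:ℝ) else 0) := by
          rw [hABfun, Finset.sum_mul_sum]
          refine Finset.sum_congr rfl fun u _ => Finset.sum_congr rfl fun v _ => ?_
          by_cases h1 : lo u < t <;> by_cases h2 : t ≤ hi v <;> simp [h1, h2]
        rw [e, Finset.sum_boole, Finset.sum_boole, hAS, hBS]
      have hmem : ((S'.card : ℝ) / (((A ∪ S').card : ℝ) * ((B ∪ S').card : ℝ))) ∈ setS :=
        ⟨A, B, S', hcut, rfl⟩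
      have hgt : c < (S'.card : ℝ) / (((A ∪ S').card : ℝ) * ((B ∪ S').card : ℝ)) :=
        lt_of_lt_of_le hcon (csInf_le hbdd hmem)
      have hapos : (0:ℝ) < ((A ∪ S').card : ℝ) := by
        have hv : v₁ ∈ A ∪ S' := by
          rw [hAS]; simp only [Finset.mem_filter, mem_univ, true_and]
          exact lt_of_le_of_lt (hlohi v₁) ht1
        exact_mod_cast Finset.card_pos.2 ⟨v₁, hv⟩
      have hbpos : (0:ℝ) < ((B ∪ S').card : ℝ) := by
        have hv : v₂ ∈ B ∪ S' := by
          rw [hBS]; simp only [Finset.mem_filter, mem_univ, true_and]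
          exact le_trans ht2 (hlohi v₂)
        exact_mod_cast Finset.card_pos.2 ⟨v₂, hv⟩
      rw [hABval, hSval]
      have := (lt_div_iff₀ (mul_pos hapos hbpos)).1 hgt
      linarith
    have hmono : ∫ t in J, c * ABfun t ≤ ∫ t in J, Sfun t :=
      setIntegral_mono_on ((hintAB.const_mul c).integrableOn) hintS.integrableOn hJm hptJ
    rw [integral_const_mul] at hmono
    have hsplitS := integral_add_compl hJm hintS
    have hsplitAB := integral_add_compl hJm hintAB
    have hτ : 0 ≤ ∫ t in Jᶜ, Sfun t := by
      refine setIntegral_nonneg hJm.compl fun t _ => ?_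
      rw [hSfun]
      refine Finset.sum_nonneg fun v _ => ?_
      split <;> norm_num
    rw [hIS] at hsplitS
    rw [hTint] at hsplitAB
    rw [← hsplitAB] at hIAB
    have h5 : c * (D + ∑ v, s v)
        ≤ c * ((∫ t in J, ABfun t) + (n:ℝ) * ∫ t in Jᶜ, Sfun t) :=
      mul_le_mul_of_nonneg_left hIAB hcpos.le
    have hcn' : c * n < 1 := (lt_div_iff₀ hnpos).1 hcn
    have h6 : (c * n - 1) * (∫ t in Jᶜ, Sfun t) ≤ 0 :=
      mul_nonpos_of_nonpos_of_nonneg (by linarith) hτ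
    have h7 : 0 < c * ∑ v, s v := mul_pos hcpos hspos
    linarith [hmono, hsplitS, h5, h6, h7, hcD]
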